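/- Let S be a small cube and let f ∈ 𝔽₂^{U*} be the unique element with S ⊆ T_f. Then S ∩ C is nonempty if and only if ψ(f) = 0 in U. -/

import Mathlib

open scoped Classical in
/-- Let `S` be a small cube and `f ∈ 𝔽₂^{U*}` the unique element with `S ⊆ T_f`.
Then `S` meets the Hamming code `C = {u : φ(u) = 0}` if and only if
`ψ(f) = ∑_{t ∈ U*} f_t • t = 0` in `U = 𝔽₂^k/W`. -/
theorem statement7 (k d : ℕ) (hk : 1 ≤ k)
    (X : Finset (Fin k → ZMod 2)) (hX0 : (0 : Fin k → ZMod 2) ∉ X)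
    (hXcard : X.card = d)
    (D : Finset (Fin k → ZMod 2)) (hDX : D ⊆ X)
    (W : Submodule (ZMod 2) (Fin k → ZMod 2))
    (hW : W = Submodule.span (ZMod 2) (D : Set (Fin k → ZMod 2)))
    (spanB : Submodule (ZMod 2) ({x // x ∈ X} → ZMod 2))
    (hspanB : spanB = Submodule.span (ZMod 2)
      {v | ∃ x : {x // x ∈ X}, (x : Fin k → ZMod 2) ∈ D ∧ v = Pi.single x (1 : ZMod 2)})
    (S : Set ({x // x ∈ X} → ZMod 2)) (hS : ∃ u₀, S = {v | v - u₀ ∈ spanB})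
    (f : {t : (Fin k → ZMod 2) ⧸ W // t ≠ 0} → ZMod 2)
    (hf : S ⊆ {u | ∀ t : {t : (Fin k → ZMod 2) ⧸ W // t ≠ 0},
      (∑ x : {x // x ∈ X},
        if (Submodule.Quotient.mk (x : Fin k → ZMod 2) : (Fin k → ZMod 2) ⧸ W)
            = (t : (Fin k → ZMod 2) ⧸ W)
        then u x else 0) = f t}) :
    (S ∩ {u : {x // x ∈ X} → ZMod 2 |
        ∑ x : {x // x ∈ X}, u x • (x : Fin k → ZMod 2) = 0}).Nonempty ↔
      (∑ t : (Fin k → ZMod 2) ⧸ W, if ht : t ≠ 0 then f ⟨t, ht⟩ • t else 0) = 0 := by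
  obtain ⟨u₀, rfl⟩ := hS
  -- the coefficient map φ as a linear map
  set φL : ({x // x ∈ X} → ZMod 2) →ₗ[ZMod 2] (Fin k → ZMod 2) :=
    { toFun := fun u => ∑ x : {x // x ∈ X}, u x • (x : Fin k → ZMod 2),
      map_add' := by
        intro u v
        simp only [Pi.add_apply, add_smul, Finset.sum_add_distrib]
      map_smul' := by
        intro c u
        simp only [Pi.smul_apply, smul_eq_mul, RingHom.id_apply, smul_smul, Finset.smul_sum] } with hφL
  have hsingle : ∀ x : {x // x ∈ X}, φL (Pi.single x (1 : ZMod 2)) = (x : Fin k → ZMod 2) := by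
    intro x
    rw [hφL]
    simp only [LinearMap.coe_mk, AddHom.coe_mk]
    rw [Finset.sum_eq_single x]
    · simp
    · intro y _ hy
      simp [Pi.single_apply, hy]
    · simp
  have hu₀S : u₀ ∈ {v | v - u₀ ∈ spanB} := by
    simp [Submodule.zero_mem]
  have hf0 := hf hu₀S
  -- ψ(f) = mk (φ u₀)
  have key : (∑ t : (Fin k → ZMod 2) ⧸ W, if ht : t ≠ 0 then f ⟨t, ht⟩ • t else 0)
      = Submodule.Quotient.mk (φL u₀) := by
    have step1 : (∑ t : (Fin k → ZMod 2) ⧸ W, if ht : t ≠ 0 then f ⟨t, ht⟩ • t else 0)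
        = ∑ t : (Fin k → ZMod 2) ⧸ W, ∑ x : {x // x ∈ X},
            (if (Submodule.Quotient.mk (x : Fin k → ZMod 2) : (Fin k → ZMod 2) ⧸ W) = t
              then u₀ x • t else 0) := by
      refine Finset.sum_congr rfl fun t _ => ?_
      by_cases ht : t = 0
      · subst ht
        rw [dif_neg (by simp)]
        refine (Finset.sum_eq_zero fun x _ => ?_).symm
        split <;> simp
      · rw [dif_pos ht, ← hf0 ⟨t, ht⟩, Finset.sum_smul]
        refine Finset.sum_congr rfl fun x _ => ?_
        split <;> simp
    rw [step1, Finset.sum_comm]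
    have step3 : ∀ x : {x // x ∈ X},
        (∑ t : (Fin k → ZMod 2) ⧸ W,
          if (Submodule.Quotient.mk (x : Fin k → ZMod 2) : (Fin k → ZMod 2) ⧸ W) = t
            then u₀ x • t else 0)
        = u₀ x • (Submodule.Quotient.mk (x : Fin k → ZMod 2) : (Fin k → ZMod 2) ⧸ W) := by
      intro x
      rw [Finset.sum_eq_single
        ((Submodule.Quotient.mk (x : Fin k → ZMod 2)) : (Fin k → ZMod 2) ⧸ W)]
      · simp
      · intro t _ ht
        rw [if_neg (fun h => ht h.symm)]
      · simp
    rw [Finset.sum_congr rfl fun x _ => step3 x]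
    show _ = (W.mkQ) (φL u₀)
    rw [hφL]
    simp only [LinearMap.coe_mk, AddHom.coe_mk, map_sum, map_smul]
    rfl
  rw [key]
  have himg : Submodule.map φL spanB = W := by
    rw [hspanB, Submodule.map_span, hW]
    congr 1
    ext y
    constructor
    · rintro ⟨v, ⟨x, hxD, rfl⟩, rfl⟩
      rw [hsingle x]
      exact hxD
    · intro hy
      exact ⟨Pi.single ⟨y, hDX hy⟩ (1 : ZMod 2), ⟨⟨y, hDX hy⟩, hy, rfl⟩,
        hsingle ⟨y, hDX hy⟩⟩
  rw [Submodule.Quotient.mk_eq_zero]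
  constructor
  · rintro ⟨v, hvS, hvC⟩
    have hv : φL v = 0 := hvC
    have h1 : φL (v - u₀) ∈ W := himg ▸ Submodule.mem_map_of_mem hvS
    have : φL (v - u₀) = -(φL u₀) := by rw [map_sub, hv, zero_sub]
    rw [this] at h1
    simpa using W.neg_mem h1
  · intro h
    rw [← himg] at h
    obtain ⟨w, hw, hφw⟩ := h
    refine ⟨u₀ - w, ?_, ?_⟩
    · show u₀ - w - u₀ ∈ spanB
      have : u₀ - w - u₀ = -w := by ring
      rw [this]
      exact spanB.neg_mem hw
    · show φL (u₀ - w) = 0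
      rw [map_sub, hφw, sub_self]
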